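/- Let Δ ≥ 2 be an integer and 0 < s < 1 a real. Then the polynomial f(X) = (Δ+1)s·X^{2Δ} − Δ·X^{Δ+1} − 1 has exactly one zero on the interval (0, ∞), and this zero is greater than 1. -/

import Mathlib

theorem stmt_13 (Δ : ℕ) (hΔ : 2 ≤ Δ) (s : ℝ) (hs0 : 0 < s) (hs1 : s < 1) :
    (∃! X : ℝ, 0 < X ∧ ((Δ : ℝ) + 1) * s * X ^ (2 * Δ) - (Δ : ℝ) * X ^ (Δ + 1) - 1 = 0)
    ∧ ∀ X : ℝ, 0 < X →
        ((Δ : ℝ) + 1) * s * X ^ (2 * Δ) - (Δ : ℝ) * X ^ (Δ + 1) - 1 = 0 → 1 < X := by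
  have hΔR : (2:ℝ) ≤ Δ := by exact_mod_cast hΔ
  set F : ℝ → ℝ := fun X => ((Δ : ℝ) + 1) * s * X ^ (2 * Δ) - (Δ : ℝ) * X ^ (Δ + 1) - 1 with hF
  set G : ℝ → ℝ := fun X => ((Δ : ℝ) + 1) * s * X ^ (Δ - 1) - (Δ : ℝ) - (X ^ (Δ + 1))⁻¹ with hG
  have hsplit : 2 * Δ = (Δ + 1) + (Δ - 1) := by omega
  have hFG : ∀ X : ℝ, 0 < X → F X = X ^ (Δ + 1) * G X := by
    intro X hX
    have hXne : X ^ (Δ + 1) ≠ 0 := pow_ne_zero _ hX.ne'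
    simp only [hF, hG]
    rw [hsplit, pow_add]
    field_simp
  have hGmono : StrictMonoOn G (Set.Ioi 0) := by
    intro a ha b hb hab
    simp only [Set.mem_Ioi] at ha hb
    have h1 : a ^ (Δ - 1) < b ^ (Δ - 1) := pow_lt_pow_left₀ hab ha.le (by omega)
    have h2 : a ^ (Δ + 1) < b ^ (Δ + 1) := pow_lt_pow_left₀ hab ha.le (by omega)
    have h3 : (b ^ (Δ + 1))⁻¹ < (a ^ (Δ + 1))⁻¹ :=
      inv_strictAnti₀ (pow_pos ha _) h2
    have h4 : ((Δ:ℝ)+1)*s*a^(Δ-1) < ((Δ:ℝ)+1)*s*b^(Δ-1) :=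
      mul_lt_mul_of_pos_left h1 (by positivity)
    simp only [hG]
    linarith
  -- all positive roots of F are > 1
  have hgt1 : ∀ X : ℝ, 0 < X → F X = 0 → 1 < X := by
    intro X hX hFX
    by_contra h
    push_neg at h
    have hG1 : G 1 < 0 := by
      simp only [hG, one_pow, inv_one]
      nlinarith
    have hGX : G X < 0 := by
      rcases lt_or_eq_of_le h with h' | h'
      · exact lt_trans (hGmono (Set.mem_Ioi.mpr hX) (Set.mem_Ioi.mpr one_pos) h') hG1
      · rw [h']; exact hG1
    have : F X < 0 := by
      rw [hFG X hX]
      exact mul_neg_of_pos_of_neg (pow_pos hX _) hGX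
    linarith
  -- existence via IVT on [1, 2/s]
  have hM1 : (1:ℝ) < 2 / s := by
    rw [lt_div_iff₀ hs0]; linarith
  have hMpos : (0:ℝ) < 2 / s := by linarith
  have hFM : 0 < F (2 / s) := by
    rw [hFG _ hMpos]
    have hMpow : 2 / s ≤ (2 / s) ^ (Δ - 1) := by
      calc 2 / s = (2/s) ^ 1 := (pow_one _).symm
      _ ≤ (2/s) ^ (Δ - 1) := pow_le_pow_right₀ hM1.le (by omega)
    have hs2 : s * (2 / s) = 2 := by field_simp
    have h5 : 2 * ((Δ:ℝ)+1) ≤ ((Δ:ℝ)+1) * s * (2/s) ^ (Δ - 1) := by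
      have := mul_le_mul_of_nonneg_left hMpow hs0.le
      rw [hs2] at this
      nlinarith
    have h6 : ((2/s) ^ (Δ + 1))⁻¹ ≤ 1 := by
      have : (1:ℝ) ≤ (2/s) ^ (Δ + 1) := one_le_pow₀ hM1.le
      exact inv_le_one_of_one_le₀ this
    have hGM : 0 < G (2 / s) := by
      simp only [hG]; nlinarith
    exact mul_pos (pow_pos hMpos _) hGM
  have hF1 : F 1 ≤ 0 := by
    simp only [hF, one_pow]
    nlinarith
  have hcont : ContinuousOn F (Set.Icc 1 (2/s)) := by
    apply Continuous.continuousOn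
    simp only [hF]
    continuity
  obtain ⟨c, hc, hFc⟩ := intermediate_value_Icc hM1.le hcont
    (Set.mem_Icc.mpr ⟨hF1, hFM.le⟩)
  have hcpos : 0 < c := lt_of_lt_of_le one_pos hc.1
  refine ⟨⟨c, ⟨hcpos, hFc⟩, ?_⟩, hgt1⟩
  rintro y ⟨hy, hFy⟩
  have hGy : G y = 0 := by
    have hFy' : F y = 0 := hFy
    have := hFG y hy
    rw [hFy'] at this
    have hyne : y ^ (Δ + 1) ≠ 0 := pow_ne_zero _ hy.ne'
    field_simp at this
    exact (mul_eq_zero.mp this.symm).resolve_left hyne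
  have hGc : G c = 0 := by
    have := hFG c hcpos
    rw [hFc] at this
    have hcne : c ^ (Δ + 1) ≠ 0 := pow_ne_zero _ hcpos.ne'
    field_simp at this
    exact (mul_eq_zero.mp this.symm).resolve_left hcne
  exact hGmono.injOn (Set.mem_Ioi.mpr hy) (Set.mem_Ioi.mpr hcpos) (hGy.trans hGc.symm)
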